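/- For any positive integers M and N, the set of MN×MN matrices that are Kronecker products A ⊗ B of an M×M matrix and an N×N matrix is closed in ℂ^{MN×MN}, and the subset GL(M,ℂ) ⊗ GL(N,ℂ) of invertible such products forms a subgroup of GL(MN,ℂ). -/

import Mathlib

open Matrix Kronecker

/-- The rank-one (2×2 minor) characterization of Kronecker products. -/
lemma kron_char (M N : ℕ) :
    {C : Matrix (Fin M × Fin N) (Fin M × Fin N) ℂ |
      ∃ (A : Matrix (Fin M) (Fin M) ℂ) (B : Matrix (Fin N) (Fin N) ℂ), C = A ⊗ₖ B} =
    ⋂ (q : ((Fin M × Fin M) × (Fin N × Fin N)) × ((Fin M × Fin M) × (Fin N × Fin N))),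
      {C | C (q.1.1.1, q.1.2.1) (q.1.1.2, q.1.2.2) * C (q.2.1.1, q.2.2.1) (q.2.1.2, q.2.2.2)
         = C (q.1.1.1, q.2.2.1) (q.1.1.2, q.2.2.2) * C (q.2.1.1, q.1.2.1) (q.2.1.2, q.1.2.2)} := by
  ext C
  simp only [Set.mem_setOf_eq, Set.mem_iInter]
  constructor
  · rintro ⟨A, B, rfl⟩ q
    simp only [kroneckerMap_apply, Set.mem_setOf_eq]
    ring
  · intro h
    by_cases h0 : C = 0
    · exact ⟨0, 0, by simp [h0]⟩
    · have : ∃ p q, C p q ≠ 0 := by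
        by_contra hc
        push_neg at hc
        exact h0 (by ext p q; simpa using hc p q)
      obtain ⟨⟨i₀, k₀⟩, ⟨j₀, l₀⟩, hc⟩ := this
      refine ⟨fun i j => C (i, k₀) (j, l₀),
        fun k l => C (i₀, k) (j₀, l) / C (i₀, k₀) (j₀, l₀), ?_⟩
      ext ⟨i, k⟩ ⟨j, l⟩
      have key := h (((i, j), (k, l)), ((i₀, j₀), (k₀, l₀)))
      simp only [Set.mem_setOf_eq] at key
      change C (i, k) (j, l) = C (i, k₀) (j, l₀) * (C (i₀, k) (j₀, l) / C (i₀, k₀) (j₀, l₀))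
      field_simp
      linear_combination key

theorem kronecker_products_closed_and_subgroup (M N : ℕ) :
    IsClosed {C : Matrix (Fin M × Fin N) (Fin M × Fin N) ℂ |
      ∃ (A : Matrix (Fin M) (Fin M) ℂ) (B : Matrix (Fin N) (Fin N) ℂ), C = A ⊗ₖ B} ∧
    (∃ (A : Matrix (Fin M) (Fin M) ℂ) (B : Matrix (Fin N) (Fin N) ℂ),
      IsUnit A ∧ IsUnit B ∧ (1 : Matrix (Fin M × Fin N) (Fin M × Fin N) ℂ) = A ⊗ₖ B) ∧
    (∀ C₁ C₂ : Matrix (Fin M × Fin N) (Fin M × Fin N) ℂ,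
      (∃ A B, IsUnit A ∧ IsUnit B ∧ C₁ = A ⊗ₖ B) →
      (∃ A B, IsUnit A ∧ IsUnit B ∧ C₂ = A ⊗ₖ B) →
      ∃ (A : Matrix (Fin M) (Fin M) ℂ) (B : Matrix (Fin N) (Fin N) ℂ),
        IsUnit A ∧ IsUnit B ∧ C₁ * C₂ = A ⊗ₖ B) ∧
    (∀ C : Matrix (Fin M × Fin N) (Fin M × Fin N) ℂ,
      (∃ A B, IsUnit A ∧ IsUnit B ∧ C = A ⊗ₖ B) →
      ∃ (A : Matrix (Fin M) (Fin M) ℂ) (B : Matrix (Fin N) (Fin N) ℂ),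
        IsUnit A ∧ IsUnit B ∧ C⁻¹ = A ⊗ₖ B) := by
  refine ⟨?_, ?_, ?_, ?_⟩
  · rw [kron_char]
    refine isClosed_iInter fun q => isClosed_eq ?_ ?_ <;>
      exact Continuous.mul
        (((continuous_apply _).comp (continuous_apply _)))
        (((continuous_apply _).comp (continuous_apply _)))
  · exact ⟨1, 1, isUnit_one, isUnit_one, (Matrix.one_kronecker_one).symm⟩
  · rintro C₁ C₂ ⟨A₁, B₁, hA₁, hB₁, rfl⟩ ⟨A₂, B₂, hA₂, hB₂, rfl⟩
    exact ⟨A₁ * A₂, B₁ * B₂, hA₁.mul hA₂, hB₁.mul hB₂,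
      (Matrix.mul_kronecker_mul A₁ A₂ B₁ B₂).symm⟩
  · rintro C ⟨A, B, hA, hB, rfl⟩
    exact ⟨A⁻¹, B⁻¹, Matrix.isUnit_nonsing_inv_iff.mpr hA,
      Matrix.isUnit_nonsing_inv_iff.mpr hB, Matrix.inv_kronecker A B⟩
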